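/- Let A : X → Y and B, C : Y → X satisfy A(BA)² = ABACA = ACABA = (AC)²A. Then AC − I has finite descent if and only if BA − I has finite descent, and in that case their descents are equal. -/

import Mathlib

open Polynomial ContinuousLinearMap

variable {X Y : Type*} [NormedAddCommGroup X] [NormedSpace ℂ X] [CompleteSpace X]
  [NormedAddCommGroup Y] [NormedSpace ℂ Y] [CompleteSpace Y]

private lemma key_descent {X Y : Type*} [NormedAddCommGroup X] [NormedSpace ℂ X]
    [NormedAddCommGroup Y] [NormedSpace ℂ Y]
    (S : Y →L[ℂ] Y) (T : X →L[ℂ] X) (M : X →L[ℂ] Y) (D : Y →L[ℂ] X)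
    (hSM : ∀ x, S (M x) = M (T x)) (hMD : ∀ y, M (D y) = (((1 + S) ^ 4 : Y →L[ℂ] Y)) y)
    (n : ℕ)
    (hn : LinearMap.range ((T ^ n : X →L[ℂ] X) : X →ₗ[ℂ] X) = LinearMap.range ((T ^ (n + 1) : X →L[ℂ] X) : X →ₗ[ℂ] X)) :
    LinearMap.range ((S ^ n : Y →L[ℂ] Y) : Y →ₗ[ℂ] Y) = LinearMap.range ((S ^ (n + 1) : Y →L[ℂ] Y) : Y →ₗ[ℂ] Y) := by
  have hpow : ∀ (k : ℕ) (x : X), (S ^ k) (M x) = M ((T ^ k) x) := by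
    intro k
    induction k with
    | zero => simp
    | succ k ih =>
      intro x
      simp only [pow_succ', ContinuousLinearMap.mul_apply]
      rw [ih, hSM]
  apply le_antisymm
  · rintro _ ⟨y, rfl⟩
    have hq : ((1 + S) ^ 4 : Y →L[ℂ] Y) = 1 + S * (4 + 6 * S + 4 * S ^ 2 + S ^ 3) := by
      noncomm_ring
    set q : Y →L[ℂ] Y := 4 + 6 * S + 4 * S ^ 2 + S ^ 3 with hqdef
    have h5 : (S ^ n) ((((1 + S) ^ 4 : Y →L[ℂ] Y)) y) = (S ^ n) y + (S ^ (n + 1)) (q y) := by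
      rw [hq]
      simp only [ContinuousLinearMap.add_apply, ContinuousLinearMap.one_apply,
        ContinuousLinearMap.mul_apply, map_add, pow_succ, ContinuousLinearMap.mul_apply]
    have hmem : (T ^ n) (D y) ∈ LinearMap.range ((T ^ (n + 1) : X →L[ℂ] X) : X →ₗ[ℂ] X) := by
      rw [← hn]; exact ⟨D y, rfl⟩
    obtain ⟨x, hx⟩ := hmem
    have h6 : (S ^ n) ((((1 + S) ^ 4 : Y →L[ℂ] Y)) y) = (S ^ (n + 1)) (M x) := by
      rw [← hMD, hpow, ← hx, ContinuousLinearMap.coe_coe, ← hpow]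
    refine ⟨M x - q y, ?_⟩
    rw [map_sub, ContinuousLinearMap.coe_coe, ContinuousLinearMap.coe_coe, ← h6, h5]
    abel
  · rintro _ ⟨y, rfl⟩
    exact ⟨S y, by simp [pow_succ, ContinuousLinearMap.mul_apply]⟩

theorem stmt9 (A : X →L[ℂ] Y) (B C : Y →L[ℂ] X)
    (h1 : A ∘L B ∘L A ∘L B ∘L A = A ∘L B ∘L A ∘L C ∘L A)
    (h2 : A ∘L B ∘L A ∘L C ∘L A = A ∘L C ∘L A ∘L B ∘L A)
    (h3 : A ∘L C ∘L A ∘L B ∘L A = A ∘L C ∘L A ∘L C ∘L A) :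
    ((∃ n : ℕ, LinearMap.range (((A ∘L C - 1) ^ n : Y →L[ℂ] Y) : Y →ₗ[ℂ] Y) = LinearMap.range (((A ∘L C - 1) ^ (n + 1) : Y →L[ℂ] Y) : Y →ₗ[ℂ] Y)) ↔
      (∃ n : ℕ, LinearMap.range (((B ∘L A - 1) ^ n : X →L[ℂ] X) : X →ₗ[ℂ] X) = LinearMap.range (((B ∘L A - 1) ^ (n + 1) : X →L[ℂ] X) : X →ₗ[ℂ] X))) ∧
    ((∃ n : ℕ, LinearMap.range (((A ∘L C - 1) ^ n : Y →L[ℂ] Y) : Y →ₗ[ℂ] Y) = LinearMap.range (((A ∘L C - 1) ^ (n + 1) : Y →L[ℂ] Y) : Y →ₗ[ℂ] Y)) →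
      sInf {n : ℕ | LinearMap.range (((A ∘L C - 1) ^ n : Y →L[ℂ] Y) : Y →ₗ[ℂ] Y) = LinearMap.range (((A ∘L C - 1) ^ (n + 1) : Y →L[ℂ] Y) : Y →ₗ[ℂ] Y)} =
        sInf {n : ℕ | LinearMap.range (((B ∘L A - 1) ^ n : X →L[ℂ] X) : X →ₗ[ℂ] X) = LinearMap.range (((B ∘L A - 1) ^ (n + 1) : X →L[ℂ] X) : X →ₗ[ℂ] X)}) := by
  have p1 : ∀ x : X, A (B (A (B (A x)))) = A (B (A (C (A x)))) := by
    intro x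
    have := congrArg (fun f : X →L[ℂ] Y => f x) h1
    simpa using this
  have p2 : ∀ x : X, A (B (A (C (A x)))) = A (C (A (B (A x)))) := by
    intro x
    have := congrArg (fun f : X →L[ℂ] Y => f x) h2
    simpa using this
  have p3 : ∀ x : X, A (C (A (B (A x)))) = A (C (A (C (A x)))) := by
    intro x
    have := congrArg (fun f : X →L[ℂ] Y => f x) h3
    simpa using this
  -- intertwiner for the (AC - 1) side:  S ∘ (ABA) = (ABA) ∘ T
  have hSM : ∀ x : X, (A ∘L C - 1) ((A ∘L B ∘L A) x) = (A ∘L B ∘L A) ((B ∘L A - 1) x) := by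
    intro x
    simp only [ContinuousLinearMap.sub_apply, ContinuousLinearMap.one_apply,
      ContinuousLinearMap.comp_apply, map_sub]
    rw [← p2, ← p1]
  -- factorization (AC)^4 = (ABA) ∘ (CACAC)
  have hMD : ∀ y : Y, (A ∘L B ∘L A) ((C ∘L A ∘L C ∘L A ∘L C) y)
      = (((1 + (A ∘L C - 1)) ^ 4 : Y →L[ℂ] Y)) y := by
    intro y
    have e : ((1 + (A ∘L C - 1)) : Y →L[ℂ] Y) = A ∘L C := by abel
    rw [e]
    simp only [ContinuousLinearMap.comp_apply, pow_succ, pow_zero, one_mul,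
      ContinuousLinearMap.mul_apply]
    rw [(p2 (C (A (C y)))).trans (p3 (C (A (C y))))]
  -- intertwiner for the (BA - 1) side:  T ∘ (BACAC) = (BACAC) ∘ S
  have hTL : ∀ y : Y, (B ∘L A - 1) ((B ∘L A ∘L C ∘L A ∘L C) y)
      = (B ∘L A ∘L C ∘L A ∘L C) ((A ∘L C - 1) y) := by
    intro y
    simp only [ContinuousLinearMap.sub_apply, ContinuousLinearMap.one_apply,
      ContinuousLinearMap.comp_apply, map_sub]
    rw [congrArg B ((p2 (C y)).trans (p3 (C y)))]
  -- factorization (BA)^4 = (BACAC) ∘ (ACA)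
  have hLE : ∀ x : X, (B ∘L A ∘L C ∘L A ∘L C) ((A ∘L C ∘L A) x)
      = (((1 + (B ∘L A - 1)) ^ 4 : X →L[ℂ] X)) x := by
    intro x
    have e : ((1 + (B ∘L A - 1)) : X →L[ℂ] X) = B ∘L A := by abel
    rw [e]
    simp only [ContinuousLinearMap.comp_apply, pow_succ, pow_zero, one_mul,
      ContinuousLinearMap.mul_apply]
    rw [p1 (B (A x)), p3 x, (p2 (C (A x))).trans (p3 (C (A x)))]
  have hiff : ∀ n : ℕ,
      (LinearMap.range (((A ∘L C - 1) ^ n : Y →L[ℂ] Y) : Y →ₗ[ℂ] Y) = LinearMap.range (((A ∘L C - 1) ^ (n + 1) : Y →L[ℂ] Y) : Y →ₗ[ℂ] Y)) ↔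
      (LinearMap.range (((B ∘L A - 1) ^ n : X →L[ℂ] X) : X →ₗ[ℂ] X) = LinearMap.range (((B ∘L A - 1) ^ (n + 1) : X →L[ℂ] X) : X →ₗ[ℂ] X)) := by
    intro n
    constructor
    · intro h
      exact key_descent (B ∘L A - 1) (A ∘L C - 1) (B ∘L A ∘L C ∘L A ∘L C) (A ∘L C ∘L A)
        hTL hLE n h
    · intro h
      exact key_descent (A ∘L C - 1) (B ∘L A - 1) (A ∘L B ∘L A) (C ∘L A ∘L C ∘L A ∘L C)
        hSM hMD n h
  constructor
  · exact ⟨fun ⟨n, h⟩ => ⟨n, (hiff n).mp h⟩, fun ⟨n, h⟩ => ⟨n, (hiff n).mpr h⟩⟩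
  · intro _
    exact congrArg sInf (Set.ext fun n => hiff n)
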